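/- Let l, r ≥ 1 be integers and let R = {−l, r} ⊆ ℤ. Then for every q ≥ 2, the supremum of R_q(X) over all R-recoverable systems X over alphabets of size q equals gcd(l, r)/(l + r). -/

import Mathlib

/-- An `R`-recoverable system on `ℤ`: every symbol `x_i` is a function of the
symbols in positions `i + R`. -/
def IsRecoverable {Q : Type*} (R : Set ℤ) (X : Set (ℤ → Q)) : Prop :=
  ∀ i : ℤ, ∃ f : (ℤ → Q) → Q,
    (∀ x y : ℤ → Q, (∀ j ∈ R, x (i + j) = y (i + j)) → f x = f y) ∧
    ∀ x ∈ X, f x = x i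

/-- `|B_n(X)|`: the number of restrictions of elements of `X` to `{0, …, n−1}`. -/
noncomputable def blockCount {Q : Type*} (X : Set (ℤ → Q)) (n : ℕ) : ℕ :=
  Nat.card ↥((fun x : ℤ → Q => fun i : Fin n => x ((i : ℕ) : ℤ)) '' X)

/-- The rate `R_q(X) = limsup_{n→∞} (1/n) log_q |B_n(X)|`. -/
noncomputable def rate (q : ℕ) {Q : Type*} (X : Set (ℤ → Q)) : ℝ :=
  Filter.limsup (fun n : ℕ => Real.logb q (blockCount X n) / n) Filter.atTop

namespace Stmt8Aux

open Filter Real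


variable {Q : Type*} {l r : ℕ} {X : Set (ℤ → Q)}

/-- If `x,y ∈ X` agree at `i` and `i + (l+r)`, they agree at `i + l`. -/
lemma recA (hX : IsRecoverable ({-(l : ℤ), (r : ℤ)} : Set ℤ) X)
    {x y : ℤ → Q} (hx : x ∈ X) (hy : y ∈ X) (i : ℤ)
    (h1 : x i = y i) (h2 : x (i + (l + r)) = y (i + (l + r))) :
    x (i + l) = y (i + l) := by
  obtain ⟨f, hf1, hf2⟩ := hX (i + l)
  rw [← hf2 x hx, ← hf2 y hy]
  apply hf1
  intro j hj
  simp only [Set.mem_insert_iff, Set.mem_singleton_iff] at hj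
  rcases hj with rfl | rfl
  · simpa [show (i : ℤ) + l + -(l : ℤ) = i by ring] using h1
  · simpa [show (i : ℤ) + l + r = i + (l + r) by ring] using h2

/-- Chain propagation: agreement on an AP of差 `l+r` propagates by steps of `l`. -/
lemma chain (hX : IsRecoverable ({-(l : ℤ), (r : ℤ)} : Set ℤ) X)
    {x y : ℤ → Q} (hx : x ∈ X) (hy : y ∈ X) {d B K : ℤ}
    (H : ∀ c k : ℤ, 0 ≤ c → c < d → -B ≤ k → k ≤ K →
      x (c + k * ((l : ℤ) + r)) = y (c + k * ((l : ℤ) + r))) :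
    ∀ j : ℕ, ∀ c k : ℤ, 0 ≤ c → c < d → -B ≤ k → (j : ℤ) + k ≤ K →
      x (c + (j : ℤ) * l + k * ((l : ℤ) + r)) = y (c + (j : ℤ) * l + k * ((l : ℤ) + r)) := by
  intro j
  induction j with
  | zero => intro c k h1 h2 h3 h4; simpa using H c k h1 h2 h3 (by omega)
  | succ j ih =>
    intro c k h1 h2 h3 h4
    have e : c + ((j : ℤ) + 1) * l + k * ((l : ℤ) + r)
        = (c + (j : ℤ) * l + k * ((l : ℤ) + r)) + l := by ring
    push_cast
    rw [e]
    apply recA hX hx hy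
    · exact ih c k h1 h2 h3 (by push_cast at h4 ⊢; omega)
    · have e2 : (c + (j : ℤ) * l + k * ((l : ℤ) + r)) + ((l : ℤ) + r)
          = c + (j : ℤ) * l + (k + 1) * ((l : ℤ) + r) := by ring
      rw [e2]
      exact ih c (k + 1) h1 h2 (by omega) (by push_cast at h4 ⊢; omega)



set_option maxHeartbeats 1000000 in
/-- Every `i ∈ [0, n)` can be written `c + j*l + k*(l+r)` with controlled ranges. -/
lemma cover (l r : ℕ) (hl : 1 ≤ l) (hr : 1 ≤ r) (n : ℕ) (i : ℤ)
    (h0 : 0 ≤ i) (h1 : i < (n : ℤ)) :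
    ∃ c j k : ℤ, 0 ≤ c ∧ c < (Nat.gcd l r : ℤ) ∧ 0 ≤ j ∧ j < (l : ℤ) + r ∧
      -((l : ℤ) + 1) ≤ k ∧ j + k ≤ ((n / (l + r) : ℕ) : ℤ) + ((l : ℤ) + r) ∧
      i = c + j * l + k * ((l : ℤ) + r) := by
  set d : ℤ := (Nat.gcd l r : ℤ) with hd
  set p : ℤ := (l : ℤ) + r with hp
  set N : ℤ := ((n / (l + r) : ℕ) : ℤ) with hN
  have hdpos : 0 < d := by
    rw [hd]; exact_mod_cast Nat.gcd_pos_of_pos_left r hl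
  have hppos : 0 < p := by rw [hp]; omega
  set c : ℤ := i % d with hc
  have hc0 : 0 ≤ c := Int.emod_nonneg i (by omega)
  have hcd : c < d := Int.emod_lt_of_pos i hdpos
  set m : ℤ := i / d with hm
  have him : i = c + m * d := by
    rw [hc, hm]; have := Int.mul_ediv_add_emod i d; linarith
  set a : ℤ := Int.gcdA l r with ha
  set b : ℤ := Int.gcdB l r with hb
  have hbez : d = (l : ℤ) * a + (r : ℤ) * b := by
    rw [hd, ha, hb, ← Int.gcd_natCast_natCast]; exact Int.gcd_eq_gcd_ab _ _
  set j0 : ℤ := m * (a - b) with hj0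
  have hi2 : i = c + j0 * l + (m * b) * p := by
    rw [him, hbez, hj0, hp]; ring
  set j : ℤ := j0 % p with hj
  set t : ℤ := j0 / p with ht
  have hj0t : j0 = p * t + j := by
    rw [hj, ht]; have := Int.mul_ediv_add_emod j0 p; linarith
  have hj0' : 0 ≤ j := Int.emod_nonneg j0 (by omega)
  have hjp : j < p := Int.emod_lt_of_pos j0 hppos
  set k : ℤ := t * l + m * b with hk
  have hik : i = c + j * l + k * p := by rw [hi2, hj0t, hk]; ring
  have hdl : d ≤ (l : ℤ) := by
    rw [hd]; exact_mod_cast Nat.le_of_dvd hl (Nat.gcd_dvd_left l r)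
  have hl' : (1 : ℤ) ≤ (l : ℤ) := by exact_mod_cast hl
  have hkp : k * p = i - c - j * l := by linarith [hik]
  have hjl : j * l ≤ (p - 1) * l :=
    mul_le_mul_of_nonneg_right (by omega) (by linarith)
  -- lower bound for k
  have hklow : -((l : ℤ) + 1) ≤ k := by
    by_contra h
    push_neg at h
    have hk2 : k ≤ -((l : ℤ) + 2) := by omega
    have h3 : k * p ≤ (-((l : ℤ) + 2)) * p := mul_le_mul_of_nonneg_right hk2 (le_of_lt hppos)
    nlinarith
  -- upper bound for k
  have hNn : (n : ℤ) < p * (N + 1) := by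
    have h1 : ((l + r : ℕ) : ℤ) * N + ((n % (l + r) : ℕ) : ℤ) = (n : ℤ) := by
      rw [hN]; exact_mod_cast Nat.div_add_mod n (l + r)
    have h2 : ((n % (l + r) : ℕ) : ℤ) < p := by
      rw [hp]; exact_mod_cast Nat.mod_lt _ (show 0 < l + r by omega)
    have h4 : ((l + r : ℕ) : ℤ) = p := by rw [hp]; push_cast; ring
    rw [h4] at h1
    rw [show p * (N + 1) = p * N + p by ring]
    linarith
  have hkup : k ≤ N := by
    by_contra h
    push_neg at h
    have hk2 : N + 1 ≤ k := by omega
    have h3 : (N + 1) * p ≤ k * p := mul_le_mul_of_nonneg_right hk2 (le_of_lt hppos)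
    have h5 : k * p ≤ i := by
      rw [hkp]
      nlinarith [mul_nonneg hj0' (show (0:ℤ) ≤ (l:ℤ) by linarith)]
    have h6 : (N + 1) * p = p * (N + 1) := by ring
    linarith
  exact ⟨c, j, k, hc0, hcd, hj0', hjp, hklow, by omega, hik⟩



/-- The copy map: every position copies from `i + r` or `i - l`, staying in its
`(l+r)`-block and its residue class mod `gcd l r`. -/
def sig (l r : ℕ) (i : ℤ) : ℤ :=
  if i % ((l : ℤ) + r) < (l : ℤ) then i + r else i - l

/-- The optimal recoverable system: sequences constant on `sig`-orbits. -/
def X0 (l r q : ℕ) : Set (ℤ → Fin q) := {x | ∀ i, x i = x (sig l r i)}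

lemma X0_recoverable (l r q : ℕ) :
    IsRecoverable ({-(l : ℤ), (r : ℤ)} : Set ℤ) (X0 l r q) := by
  intro i
  by_cases h : i % ((l : ℤ) + r) < (l : ℤ)
  · refine ⟨fun x => x (i + (r : ℤ)), fun x y hxy => hxy (r : ℤ) (by simp), fun x hx => ?_⟩
    have := hx i
    rw [sig, if_pos h] at this
    exact this.symm
  · refine ⟨fun x => x (i + -(l : ℤ)), fun x y hxy => hxy (-(l : ℤ)) (by simp), fun x hx => ?_⟩
    have := hx i
    rw [sig, if_neg h] at this
    rw [show i + -(l : ℤ) = i - (l : ℤ) by ring]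
    exact this.symm

lemma sig_ediv (l r : ℕ) (hl : 1 ≤ l) (hr : 1 ≤ r) (i : ℤ) :
    sig l r i / ((l : ℤ) + r) = i / ((l : ℤ) + r) := by
  have hp0 : (0 : ℤ) < (l : ℤ) + r := by omega
  have hm0 : 0 ≤ i % ((l : ℤ) + r) := Int.emod_nonneg i (by omega)
  have hmp : i % ((l : ℤ) + r) < (l : ℤ) + r := Int.emod_lt_of_pos i hp0
  have hie := Int.mul_ediv_add_emod i ((l : ℤ) + r)
  rw [sig]
  split_ifs with h
  · rw [show (i + (r:ℤ)) = (i % ((l : ℤ) + r) + r) + ((l : ℤ) + r) * (i / ((l : ℤ) + r)) by omega,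
      Int.add_mul_ediv_left _ _ (ne_of_gt hp0),
      Int.ediv_eq_zero_of_lt (by omega) (by omega)]
    omega
  · rw [show (i - (l:ℤ)) = (i % ((l : ℤ) + r) - l) + ((l : ℤ) + r) * (i / ((l : ℤ) + r)) by omega,
      Int.add_mul_ediv_left _ _ (ne_of_gt hp0),
      Int.ediv_eq_zero_of_lt (by omega) (by omega)]
    omega

lemma sig_emod (l r : ℕ) (i : ℤ) :
    sig l r i % (Nat.gcd l r : ℤ) = i % (Nat.gcd l r : ℤ) := by
  obtain ⟨s, hs⟩ : (Nat.gcd l r : ℤ) ∣ (l : ℤ) :=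
    Int.natCast_dvd_natCast.mpr (Nat.gcd_dvd_left l r)
  obtain ⟨t, ht⟩ : (Nat.gcd l r : ℤ) ∣ (r : ℤ) :=
    Int.natCast_dvd_natCast.mpr (Nat.gcd_dvd_right l r)
  rw [sig]
  split_ifs with h
  · rw [ht, Int.add_mul_emod_self_left]
  · rw [hs, show i - (Nat.gcd l r : ℤ) * s = i + (Nat.gcd l r : ℤ) * (-s) by ring,
      Int.add_mul_emod_self_left]

/-- Lookup with default. -/
def wfun (q K d : ℕ) (hq : 0 < q) (u : Fin K × Fin d → Fin q) (a b : ℤ) : Fin q :=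
  if h : 0 ≤ a ∧ a < (K : ℤ) ∧ 0 ≤ b ∧ b < (d : ℤ) then
    u (⟨a.toNat, by omega⟩, ⟨b.toNat, by omega⟩)
  else ⟨0, hq⟩

def xu (l r q K : ℕ) (hq : 0 < q) (u : Fin K × Fin (Nat.gcd l r) → Fin q) : ℤ → Fin q :=
  fun i => wfun q K (Nat.gcd l r) hq u (i / ((l : ℤ) + r)) (i % (Nat.gcd l r : ℤ))

lemma xu_mem (l r q K : ℕ) (hl : 1 ≤ l) (hr : 1 ≤ r) (hq : 0 < q)
    (u : Fin K × Fin (Nat.gcd l r) → Fin q) : xu l r q K hq u ∈ X0 l r q := by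
  intro i
  show wfun q K (Nat.gcd l r) hq u (i / ((l : ℤ) + r)) (i % (Nat.gcd l r : ℤ))
      = wfun q K (Nat.gcd l r) hq u ((sig l r i) / ((l : ℤ) + r)) ((sig l r i) % (Nat.gcd l r : ℤ))
  rw [sig_ediv l r hl hr i, sig_emod l r i]

lemma count_ge (l r q : ℕ) (hl : 1 ≤ l) (hr : 1 ≤ r) (hq : 2 ≤ q) (n : ℕ) :
    q ^ ((n / (l + r)) * Nat.gcd l r) ≤ blockCount (X0 l r q) n := by
  classical
  have hq0 : 0 < q := by omega
  set d := Nat.gcd l r with hd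
  set K := n / (l + r) with hK
  have hdp : d ≤ l + r := by
    have h1 : d ∣ l := Nat.gcd_dvd_left l r
    have := Nat.le_of_dvd hl h1
    omega
  rw [blockCount]
  set S := ((fun x : ℤ → Fin q => fun i : Fin n => x ((i : ℕ) : ℤ)) '' X0 l r q) with hS
  have hcard : Nat.card (Fin K × Fin d → Fin q) = q ^ (K * d) := by
    rw [Nat.card_eq_fintype_card, Fintype.card_fun]
    simp
  rw [← hcard]
  set F : (Fin K × Fin d → Fin q) → S := fun u =>
    ⟨fun i : Fin n => xu l r q K hq0 u ((i : ℕ) : ℤ),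
      ⟨xu l r q K hq0 u, xu_mem l r q K hl hr hq0 u, rfl⟩⟩ with hF
  have hinj : Function.Injective F := by
    intro u v h
    have h' := congrArg Subtype.val h
    funext ⟨⟨k, hk⟩, ⟨c, hc⟩⟩
    set i : ℕ := k * (l + r) + c with hi
    have hin : i < n := by
      have e1 : (k + 1) * (l + r) = k * (l + r) + (l + r) := by ring
      have e2 : (k + 1) * (l + r) ≤ K * (l + r) := Nat.mul_le_mul_right _ (by omega)
      have e3 : K * (l + r) ≤ n := by rw [hK]; exact Nat.div_mul_le_self n (l + r)
      omega
    have hiv : xu l r q K hq0 u ((i : ℕ) : ℤ) = xu l r q K hq0 v ((i : ℕ) : ℤ) :=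
      congrFun h' ⟨i, hin⟩
    have hdiv : ((i : ℕ) : ℤ) / ((l : ℤ) + r) = (k : ℤ) := by
      have e : ((i : ℕ) : ℤ) = (c : ℤ) + ((l : ℤ) + r) * k := by push_cast [hi]; ring
      rw [e, Int.add_mul_ediv_left _ _ (by omega : ((l : ℤ) + r) ≠ 0),
        Int.ediv_eq_zero_of_lt (by omega) (by omega)]
      omega
    have hmod : ((i : ℕ) : ℤ) % ((d : ℕ) : ℤ) = (c : ℤ) := by
      obtain ⟨s, hs⟩ : ((d : ℕ) : ℤ) ∣ ((l : ℤ) + r) := by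
        have h1 : (d : ℕ) ∣ l + r := Nat.dvd_add (Nat.gcd_dvd_left l r) (Nat.gcd_dvd_right l r)
        exact_mod_cast Int.natCast_dvd_natCast.mpr h1
      have e : ((i : ℕ) : ℤ) = (c : ℤ) + ((d : ℕ) : ℤ) * (s * k) := by
        push_cast [hi]
        rw [show ((d:ℕ):ℤ) * (s * k) = (((d:ℕ):ℤ) * s) * k by ring, ← hs]
        ring
      rw [e, Int.add_mul_emod_self_left, Int.emod_eq_of_lt (by omega) (by omega)]
    have hxval : ∀ w : Fin K × Fin d → Fin q,
        xu l r q K hq0 w ((i : ℕ) : ℤ) = w (⟨k, hk⟩, ⟨c, hc⟩) := by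
      intro w
      rw [xu, hdiv, hmod, wfun, dif_pos ⟨by omega, by omega, by omega, by omega⟩]
      congr <;> omega
    rw [hxval u, hxval v] at hiv
    exact hiv
  exact hcard ▸ (Nat.card_le_card_of_injective F hinj)



/-- Two elements of a recoverable system agreeing on the determining set agree on `[0,n)`. -/
lemma determine {Q : Type*} {l r : ℕ} {X : Set (ℤ → Q)} (hl : 1 ≤ l) (hr : 1 ≤ r)
    (hX : IsRecoverable ({-(l : ℤ), (r : ℤ)} : Set ℤ) X)
    {x y : ℤ → Q} (hx : x ∈ X) (hy : y ∈ X) (n : ℕ)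
    (H : ∀ c k : ℤ, 0 ≤ c → c < (Nat.gcd l r : ℤ) → -((l : ℤ) + 1) ≤ k →
      k ≤ ((n / (l + r) : ℕ) : ℤ) + ((l : ℤ) + r) →
      x (c + k * ((l : ℤ) + r)) = y (c + k * ((l : ℤ) + r))) :
    ∀ i : ℤ, 0 ≤ i → i < (n : ℤ) → x i = y i := by
  intro i h0 h1
  obtain ⟨c, j, k, hc0, hcd, hj0, hjp, hkl, hku, hik⟩ := cover l r hl hr n i h0 h1
  have hjnat : ((j.toNat : ℤ)) = j := Int.toNat_of_nonneg hj0
  have := chain hX hx hy H j.toNat c k hc0 hcd hkl (by rw [hjnat]; exact hku)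
  rw [hjnat, ← hik] at this
  exact this

/-- General upper bound on the number of blocks of a recoverable system. -/
lemma count_le {Q : Type*} [Fintype Q] {l r q : ℕ} (hl : 1 ≤ l) (hr : 1 ≤ r)
    (hQ : Fintype.card Q = q) {X : Set (ℤ → Q)}
    (hX : IsRecoverable ({-(l : ℤ), (r : ℤ)} : Set ℤ) X) (n : ℕ) :
    blockCount X n ≤ q ^ (Nat.gcd l r * (n / (l + r) + (2 * l + r + 2))) := by
  classical
  set d := Nat.gcd l r with hd
  set M := n / (l + r) + (2 * l + r + 2) with hM
  rw [blockCount]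
  set S := ((fun x : ℤ → Q => fun i : Fin n => x ((i : ℕ) : ℤ)) '' X) with hS
  have hcard : Nat.card (Fin d × Fin M → Q) = q ^ (d * M) := by
    rw [Nat.card_eq_fintype_card, Fintype.card_fun]
    simp [hQ]
  rw [← hcard]
  set F : S → (Fin d × Fin M → Q) := fun s => fun ck =>
    s.2.choose ((ck.1 : ℤ) + ((ck.2 : ℤ) - ((l : ℤ) + 1)) * ((l : ℤ) + r)) with hF
  have hinj : Function.Injective F := by
    intro s s' h
    obtain ⟨hmem, hres⟩ := s.2.choose_spec
    obtain ⟨hmem', hres'⟩ := s'.2.choose_spec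
    have hagree : ∀ c k : ℤ, 0 ≤ c → c < (d : ℤ) → -((l : ℤ) + 1) ≤ k →
        k ≤ ((n / (l + r) : ℕ) : ℤ) + ((l : ℤ) + r) →
        s.2.choose (c + k * ((l : ℤ) + r)) = s'.2.choose (c + k * ((l : ℤ) + r)) := by
      intro c k hc0 hcd hkl hku
      have hcM : c.toNat < d := by omega
      have hkM : (k + ((l : ℤ) + 1)).toNat < M := by
        have hMz : ((M : ℕ) : ℤ) = ((n / (l + r) : ℕ) : ℤ) + 2 * l + r + 2 := by
          rw [hM]; push_cast; ring
        omega
      have := congrFun h (⟨c.toNat, hcM⟩, ⟨(k + ((l : ℤ) + 1)).toNat, hkM⟩)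
      simp only [hF] at this
      have harg : ((c.toNat : ℤ)) + (((k + ((l : ℤ) + 1)).toNat : ℤ) - ((l : ℤ) + 1)) * ((l : ℤ) + r)
          = c + k * ((l : ℤ) + r) := by
        rw [Int.toNat_of_nonneg hc0, Int.toNat_of_nonneg (by omega)]
        ring
      rwa [harg] at this
    have hblk : ∀ i : ℤ, 0 ≤ i → i < (n : ℤ) → s.2.choose i = s'.2.choose i :=
      determine hl hr hX hmem hmem' n (by exact_mod_cast hagree)
    apply Subtype.ext
    rw [← hres, ← hres']
    funext i
    exact hblk i (by positivity) (by exact_mod_cast i.2)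
  exact Nat.card_le_card_of_injective F hinj



open Filter Real

lemma logb_nat_nonneg {q : ℕ} (hq : 2 ≤ q) (m : ℕ) : 0 ≤ Real.logb q m := by
  rcases Nat.eq_zero_or_pos m with h | h
  · simp [h]
  · exact Real.logb_nonneg (by exact_mod_cast hq.trans_lt' one_lt_two) (by exact_mod_cast h)

lemma logb_pow_nat {q : ℕ} (hq : 2 ≤ q) (m : ℕ) :
    Real.logb q ((q ^ m : ℕ) : ℝ) = m := by
  have hq1 : (1 : ℝ) < q := by exact_mod_cast hq.trans_lt' one_lt_two
  rw [Nat.cast_pow, Real.logb_pow, Real.logb_self_eq_one hq1]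
  ring

lemma pointwise_le {Q : Type*} [Fintype Q] {l r q : ℕ} (hl : 1 ≤ l) (hr : 1 ≤ r) (hq : 2 ≤ q)
    (hQ : Fintype.card Q = q) {X : Set (ℤ → Q)}
    (hX : IsRecoverable ({-(l : ℤ), (r : ℤ)} : Set ℤ) X) (n : ℕ) (hn : 1 ≤ n) :
    Real.logb q (blockCount X n) / n ≤
      (Nat.gcd l r : ℝ) / ((l : ℝ) + r)
        + (Nat.gcd l r : ℝ) * ((2 * l + r + 2 : ℕ) : ℝ) / n := by
  have hq1 : (1 : ℝ) < q := by exact_mod_cast hq.trans_lt' one_lt_two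
  set d : ℝ := (Nat.gcd l r : ℝ) with hdr
  set p : ℝ := (l : ℝ) + r with hpr
  have hd0 : 0 ≤ d := by rw [hdr]; positivity
  have hp0 : (0 : ℝ) < p := by
    have h5 : (1 : ℝ) ≤ (l : ℝ) := by exact_mod_cast hl
    have h6 : (0 : ℝ) ≤ (r : ℝ) := by positivity
    rw [hpr]; linarith
  set C₀ : ℝ := ((2 * l + r + 2 : ℕ) : ℝ) with hC₀
  have hn0 : (0 : ℝ) < n := by exact_mod_cast hn
  set e : ℕ := Nat.gcd l r * (n / (l + r) + (2 * l + r + 2)) with he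
  have h1 : Real.logb q (blockCount X n) ≤ (e : ℝ) := by
    rcases Nat.eq_zero_or_pos (blockCount X n) with h | h
    · rw [h]; simpa using Nat.cast_nonneg e
    · calc Real.logb q (blockCount X n)
          ≤ Real.logb q ((q ^ e : ℕ) : ℝ) := by
            apply (Real.logb_le_logb hq1 (by exact_mod_cast h) (by positivity)).mpr
            exact_mod_cast count_le hl hr hQ hX n
        _ = (e : ℝ) := logb_pow_nat hq e
  have h2 : (e : ℝ) ≤ d * ((n : ℝ) / p + C₀) := by
    rw [he, hC₀, hdr, hpr]
    push_cast
    have hdiv : ((n / (l + r) : ℕ) : ℝ) ≤ (n : ℝ) / ((l : ℝ) + r) := by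
      have := Nat.cast_div_le (α := ℝ) (m := n) (n := l + r)
      push_cast at this
      convert this using 2
    have : (0 : ℝ) ≤ (Nat.gcd l r : ℝ) := by positivity
    nlinarith [hdiv]
  have h3 : Real.logb q (blockCount X n) / n ≤ d * ((n : ℝ) / p + C₀) / n :=
    (div_le_div_iff_of_pos_right hn0).mpr (h1.trans h2)
  have h4 : d * ((n : ℝ) / p + C₀) / n = d / p + d * C₀ / n := by
    field_simp
  show Real.logb q (blockCount X n) / n ≤ d / p + d * C₀ / n
  rw [← h4]
  exact h3

lemma rate_le {Q : Type*} [Fintype Q] {l r q : ℕ} (hl : 1 ≤ l) (hr : 1 ≤ r) (hq : 2 ≤ q)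
    (hQ : Fintype.card Q = q) {X : Set (ℤ → Q)}
    (hX : IsRecoverable ({-(l : ℤ), (r : ℤ)} : Set ℤ) X) :
    rate q X ≤ (Nat.gcd l r : ℝ) / ((l : ℝ) + r) := by
  set a : ℕ → ℝ := fun n => Real.logb q (blockCount X n) / n with ha
  set b : ℕ → ℝ := fun n => (Nat.gcd l r : ℝ) / ((l : ℝ) + r)
      + (Nat.gcd l r : ℝ) * ((2 * l + r + 2 : ℕ) : ℝ) / n with hb
  have ha0 : ∀ n, 0 ≤ a n := fun n => div_nonneg (logb_nat_nonneg hq _) (Nat.cast_nonneg n)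
  have hbt : Tendsto b atTop (nhds ((Nat.gcd l r : ℝ) / ((l : ℝ) + r))) := by
    have h0 := tendsto_const_div_atTop_nhds_zero_nat
      ((Nat.gcd l r : ℝ) * ((2 * l + r + 2 : ℕ) : ℝ))
    have := Tendsto.add
      (tendsto_const_nhds (x := (Nat.gcd l r : ℝ) / ((l : ℝ) + r)) (f := atTop)) h0
    simpa only [add_zero] using this
  have hco : IsCoboundedUnder (· ≤ ·) atTop a :=
    IsBoundedUnder.isCoboundedUnder_le ⟨0, by
      simp only [eventually_map]
      exact Eventually.of_forall fun n => ha0 n⟩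
  calc rate q X = limsup a atTop := rfl
    _ ≤ limsup b atTop := limsup_le_limsup
        (eventually_atTop.2 ⟨1, fun n hn => pointwise_le hl hr hq hQ hX n hn⟩)
        hco hbt.isBoundedUnder_le
    _ = _ := hbt.limsup_eq

lemma rate_X0 {l r q : ℕ} (hl : 1 ≤ l) (hr : 1 ≤ r) (hq : 2 ≤ q) :
    rate q (X0 l r q) = (Nat.gcd l r : ℝ) / ((l : ℝ) + r) := by
  have hq1 : (1 : ℝ) < q := by exact_mod_cast hq.trans_lt' one_lt_two
  set d : ℝ := (Nat.gcd l r : ℝ) with hdr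
  set p : ℝ := (l : ℝ) + r with hpr
  have hd0 : 0 ≤ d := by rw [hdr]; positivity
  have hp0 : (0 : ℝ) < p := by
    have h5 : (1 : ℝ) ≤ (l : ℝ) := by exact_mod_cast hl
    have h6 : (0 : ℝ) ≤ (r : ℝ) := by positivity
    rw [hpr]; linarith
  set a : ℕ → ℝ := fun n => Real.logb q (blockCount (X0 l r q) n) / n with ha
  have hlow : ∀ n : ℕ, 1 ≤ n → d / p - d / n ≤ a n := by
    intro n hn
    have hn0 : (0 : ℝ) < n := by exact_mod_cast hn
    set K : ℕ := n / (l + r) with hK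
    have hqpos : 0 < q ^ (K * Nat.gcd l r) := Nat.pow_pos (by omega)
    have hbcpos : 0 < blockCount (X0 l r q) n :=
      lt_of_lt_of_le hqpos (count_ge l r q hl hr hq n)
    have h1 : ((K * Nat.gcd l r : ℕ) : ℝ) ≤ Real.logb q (blockCount (X0 l r q) n) := by
      calc ((K * Nat.gcd l r : ℕ) : ℝ)
          = Real.logb q ((q ^ (K * Nat.gcd l r) : ℕ) : ℝ) := (logb_pow_nat hq _).symm
        _ ≤ Real.logb q (blockCount (X0 l r q) n) := by
            apply (Real.logb_le_logb hq1 (by exact_mod_cast hqpos)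
              (by exact_mod_cast hbcpos)).mpr
            exact_mod_cast count_ge l r q hl hr hq n
    have hKc : (n : ℝ) < p * K + p := by
      have h2 : n < (l + r) * (n / (l + r)) + (l + r) := by
        have h3 := Nat.div_add_mod n (l + r)
        have h4 : n % (l + r) < l + r := Nat.mod_lt _ (by omega)
        omega
      rw [hpr, hK]
      exact_mod_cast h2
    have h5 : (n : ℝ) / p - 1 ≤ (K : ℝ) := by
      have h7 : (n : ℝ) / p ≤ (K : ℝ) + 1 := by
        rw [div_le_iff₀ hp0]
        have e : ((K : ℝ) + 1) * p = p * K + p := by ring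
        linarith
      linarith
    have h6 : d / p - d / n ≤ ((K * Nat.gcd l r : ℕ) : ℝ) / n := by
      have e1 : d / p - d / n = d * ((n : ℝ) / p - 1) / n := by
        field_simp
      have e2 : ((K * Nat.gcd l r : ℕ) : ℝ) = d * K := by rw [hdr]; push_cast; ring
      rw [e1, e2]
      exact (div_le_div_iff_of_pos_right hn0).mpr (mul_le_mul_of_nonneg_left h5 hd0)
    calc d / p - d / n ≤ ((K * Nat.gcd l r : ℕ) : ℝ) / n := h6
      _ ≤ a n := (div_le_div_iff_of_pos_right hn0).mpr h1
  have hupp : ∀ n : ℕ, 1 ≤ n → a n ≤ d / p + d * ((2 * l + r + 2 : ℕ) : ℝ) / n :=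
    fun n hn => pointwise_le hl hr hq (by simp) (X0_recoverable l r q) n hn
  have hg : Tendsto (fun n : ℕ => d / p - d / n) atTop (nhds (d / p)) := by
    have h0 := tendsto_const_div_atTop_nhds_zero_nat d
    have := Tendsto.sub (tendsto_const_nhds (x := d / p) (f := atTop)) h0
    simpa only [sub_zero] using this
  have hb : Tendsto (fun n : ℕ => d / p + d * ((2 * l + r + 2 : ℕ) : ℝ) / n) atTop
      (nhds (d / p)) := by
    have h0 := tendsto_const_div_atTop_nhds_zero_nat (d * ((2 * l + r + 2 : ℕ) : ℝ))
    have := Tendsto.add (tendsto_const_nhds (x := d / p) (f := atTop)) h0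
    simpa only [add_zero] using this
  have hat : Tendsto a atTop (nhds (d / p)) :=
    tendsto_of_tendsto_of_tendsto_of_le_of_le' hg hb
      (eventually_atTop.2 ⟨1, hlow⟩) (eventually_atTop.2 ⟨1, hupp⟩)
  exact hat.limsup_eq

end Stmt8Aux

/-- For `R = {−l, r}`, the supremum of rates of `R`-recoverable systems over
alphabets of size `q` is `gcd(l,r)/(l+r)`. -/
theorem stmt8 (l r : ℕ) (hl : 1 ≤ l) (hr : 1 ≤ r) (q : ℕ) (hq : 2 ≤ q) :
    sSup {x : ℝ | ∃ (Q : Type) (_ : Fintype Q), Fintype.card Q = q ∧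
        ∃ X : Set (ℤ → Q),
          IsRecoverable ({-(l : ℤ), (r : ℤ)} : Set ℤ) X ∧ rate q X = x} =
      (Nat.gcd l r : ℝ) / ((l : ℝ) + (r : ℝ)) := by
  have hub : ∀ x ∈ {x : ℝ | ∃ (Q : Type) (_ : Fintype Q), Fintype.card Q = q ∧
      ∃ X : Set (ℤ → Q),
        IsRecoverable ({-(l : ℤ), (r : ℤ)} : Set ℤ) X ∧ rate q X = x},
      x ≤ (Nat.gcd l r : ℝ) / ((l : ℝ) + (r : ℝ)) := by
    rintro x ⟨Q, inst, hcard, X, hX, rfl⟩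
    letI := inst
    exact Stmt8Aux.rate_le hl hr hq hcard hX
  have hmem : (Nat.gcd l r : ℝ) / ((l : ℝ) + (r : ℝ)) ∈
      {x : ℝ | ∃ (Q : Type) (_ : Fintype Q), Fintype.card Q = q ∧
        ∃ X : Set (ℤ → Q),
          IsRecoverable ({-(l : ℤ), (r : ℤ)} : Set ℤ) X ∧ rate q X = x} :=
    ⟨Fin q, inferInstance, by simp, Stmt8Aux.X0 l r q, Stmt8Aux.X0_recoverable l r q,
      Stmt8Aux.rate_X0 hl hr hq⟩
  exact le_antisymm (csSup_le ⟨_, hmem⟩ hub) (le_csSup ⟨_, hub⟩ hmem)
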